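/- Let n ≥ 1, let f : [0,1) → ℝ be defined by f(0) = 1/2 and f(x) = (1 − √(1 − x²))/x² for 0 < x < 1, and let p, q ∈ ℝ^{n+1} satisfy ‖q‖ = 1, ⟨p, q⟩ = 0 and ‖p‖ < 1. Define z ∈ ℂ^{n+1} by z_j = √(f(‖p‖))·p_j + i·q_j/√(f(‖p‖)). Then ∑_j |z_j|² = 2 and ∑_j z_j² = −2√(1 − ‖p‖²); in particular ∑_j z_j² is a negative real number. -/

import Mathlib

open scoped RealInnerProductSpace

/-- The auxiliary function `f` of Section 3.1: `f(0) = 1/2` and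
`f(x) = (1 − √(1 − x²))/x²` for `x ≠ 0`. -/
noncomputable def auxF (x : ℝ) : ℝ :=
  if x = 0 then 1 / 2 else (1 - Real.sqrt (1 - x ^ 2)) / x ^ 2

/-- The computations of Lemma 3.1 (including equation (5)): for `(p, q)` in the open unit
disk cotangent bundle of `Sⁿ`, the vector `z ∈ ℂ^{n+1}` given by
`z_j = √(f(‖p‖))·p_j + i·q_j/√(f(‖p‖))` satisfies `∑ |z_j|² = 2` and
`∑ z_j² = −2√(1 − ‖p‖²)`, a negative real number. -/
theorem psiP_lift_lands_on_sphere_and_off_quadric (n : ℕ) (hn : 1 ≤ n)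
    (p q : EuclideanSpace ℝ (Fin (n + 1)))
    (hq : ‖q‖ = 1) (hpq : ⟪p, q⟫ = 0) (hp : ‖p‖ < 1)
    (z : Fin (n + 1) → ℂ)
    (hz : ∀ j, z j = (Real.sqrt (auxF ‖p‖) * p j : ℝ) +
      Complex.I * ((q j / Real.sqrt (auxF ‖p‖) : ℝ) : ℂ)) :
    (∑ j, ‖z j‖ ^ 2) = 2 ∧
    (∑ j, (z j) ^ 2) = ((-2 * Real.sqrt (1 - ‖p‖ ^ 2) : ℝ) : ℂ) := by
  set t : ℝ := ‖p‖ with ht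
  have ht0 : 0 ≤ t := norm_nonneg p
  have ht1 : t ^ 2 ≤ 1 := by nlinarith
  set s : ℝ := Real.sqrt (1 - t ^ 2) with hs
  have hs0 : 0 ≤ s := Real.sqrt_nonneg _
  have hs2 : s ^ 2 = 1 - t ^ 2 := Real.sq_sqrt (by nlinarith)
  set F : ℝ := auxF t with hF
  -- key identities for F
  have key1 : F * t ^ 2 = 1 - s ∧ F * (1 + s) = 1 := by
    by_cases h0 : t = 0
    · have : s = 1 := by rw [hs, h0]; simp
      constructor <;> simp [hF, auxF, h0, this] <;> norm_num
    · have ht0' : 0 < t := lt_of_le_of_ne ht0 (Ne.symm h0)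
      have hs1 : s < 1 := by nlinarith
      have hFt : F = (1 - s) / t ^ 2 := by rw [hF, auxF, if_neg h0]
      have htsq : t ^ 2 = (1 - s) * (1 + s) := by nlinarith
      constructor
      · rw [hFt]; field_simp
      · rw [hFt, htsq]
        have h1s : (1 : ℝ) - s ≠ 0 := by nlinarith
        field_simp
  obtain ⟨key1, key2⟩ := key1
  have hFpos : 0 < F := by nlinarith
  set a : ℝ := Real.sqrt F with hadef
  have ha2 : a ^ 2 = F := Real.sq_sqrt hFpos.le
  have hapos : 0 < a := Real.sqrt_pos.mpr hFpos
  have ha : a ≠ 0 := hapos.ne'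
  -- coordinate sums
  have hP : ∑ j, p j * p j = t ^ 2 := by
    rw [ht, ← real_inner_self_eq_norm_sq]
    simp [PiLp.inner_apply, RCLike.inner_apply, -inner_self_eq_norm_sq_to_K]
  have hQ : ∑ j, q j * q j = 1 := by
    have h : (⟪q, q⟫ : ℝ) = 1 := by rw [real_inner_self_eq_norm_sq, hq]; norm_num
    rw [← h]
    simp [PiLp.inner_apply, RCLike.inner_apply, -inner_self_eq_norm_sq_to_K]
  have hPQ : ∑ j, p j * q j = 0 := by
    rw [← hpq]
    simp [PiLp.inner_apply, RCLike.inner_apply, mul_comm]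
  have hS1 : ∑ j, (a * p j) ^ 2 = 1 - s := by
    have : ∑ j, (a * p j) ^ 2 = a ^ 2 * ∑ j, p j * p j := by
      rw [Finset.mul_sum]
      exact Finset.sum_congr rfl fun j _ => by ring
    rw [this, hP, ha2, key1]
  have hS2 : ∑ j, (q j / a) ^ 2 = 1 + s := by
    have h1 : ∑ j, (q j / a) ^ 2 = (∑ j, q j * q j) / a ^ 2 := by
      rw [Finset.sum_div]
      exact Finset.sum_congr rfl fun j _ => by field_simp
    rw [h1, hQ, ha2]
    field_simp
    linarith [key2]
  have hS3 : ∑ j, (a * p j) * (q j / a) = 0 := by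
    have : ∑ j, (a * p j) * (q j / a) = ∑ j, p j * q j := by
      exact Finset.sum_congr rfl fun j _ => by field_simp
    rw [this, hPQ]
  constructor
  · have h1 : ∀ j, ‖z j‖ ^ 2 = (a * p j) ^ 2 + (q j / a) ^ 2 := by
      intro j
      rw [hz j, mul_comm Complex.I]
      rw [Complex.sq_norm, Complex.normSq_add_mul_I]
    simp only [h1]
    rw [Finset.sum_add_distrib, hS1, hS2]
    ring
  · have expand : ∑ j, (z j) ^ 2 =
        ((∑ j, (a * p j) ^ 2 : ℝ) : ℂ) - ((∑ j, (q j / a) ^ 2 : ℝ) : ℂ) +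
          2 * Complex.I * ((∑ j, (a * p j) * (q j / a) : ℝ) : ℂ) := by
      push_cast
      rw [Finset.mul_sum, ← Finset.sum_sub_distrib, ← Finset.sum_add_distrib]
      refine Finset.sum_congr rfl fun j _ => ?_
      rw [hz j]
      push_cast
      linear_combination ((q j : ℂ) / (a : ℂ)) ^ 2 * Complex.I_sq
    rw [expand, hS1, hS2, hS3]
    push_cast
    ring
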